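/- Let p be a prime number and c₁, c₂ integers such that Δ := c₁² − 4c₂ is not a square in ℤ/pℤ. Then the polynomial X² − c₁X + c₂ is irreducible over ℚ; let K := ℚ[X]/(X² − c₁X + c₂) and let θ be the image of X in K. Then the trace Tr_{K/ℚ}( θ·(θ+1)·⋯·(θ+p) ) is a rational integer congruent to −Δ modulo p; in particular it is not divisible by p, and Tr_{K/ℚ}( θ·(θ+1)·⋯·(θ+p) )/(p+1)! is not an integer. -/

import Mathlib

open Polynomial

private def remAB (c₁ c₂ : ℤ) : ℕ → ℤ × ℤ
  | 0 => (1, 0)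
  | n+1 => ((remAB c₁ c₂ n).1 * n - c₂ * (remAB c₁ c₂ n).2,
            (remAB c₁ c₂ n).1 + (c₁ + n) * (remAB c₁ c₂ n).2)

private lemma remAB_prod (c₁ c₂ : ℤ) {S : Type} [CommRing S] (t : S)
    (ht : t ^ 2 = (c₁ : S) * t - (c₂ : S)) (n : ℕ) :
    ∏ k ∈ Finset.range n, (t + (k : S)) =
      ((remAB c₁ c₂ n).1 : S) + ((remAB c₁ c₂ n).2 : S) * t := by
  induction n with
  | zero => simp [remAB]
  | succ n ih =>
      rw [Finset.prod_range_succ, ih, remAB]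
      push_cast
      linear_combination ((remAB c₁ c₂ n).2 : S) * ht

private lemma quad_irred {k : Type} [Field k] (a b : k)
    (h : ∀ r : k, r ^ 2 - a * r + b ≠ 0) :
    Irreducible (X ^ 2 - C a * X + C b) := by
  have hm : (X ^ 2 - C a * X + C b).Monic := by monicity!
  have hnd : (X ^ 2 - C a * X + C b).natDegree = 2 := by compute_degree!
  by_contra hred
  obtain ⟨u, v, h0, h1⟩ := (hm.not_irreducible_iff_exists_add_mul_eq_coeff hnd).mp hred
  simp [coeff_X_pow, coeff_C] at h0 h1
  exact h (-u) (by linear_combination h0 - u * h1)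

private lemma prod_univ_zmod {p : ℕ} [Fact p.Prime] :
    ∏ a : ZMod p, (X - C a) = (X ^ p - X : (ZMod p)[X]) := by
  have h1 : 1 < p := (Fact.out : p.Prime).one_lt
  have hcard : Fintype.card (ZMod p) = p := ZMod.card p
  have hnd : (X ^ p - X : (ZMod p)[X]).natDegree = p :=
    FiniteField.X_pow_card_sub_X_natDegree_eq (ZMod p) h1
  have hm' : (X ^ p - X : (ZMod p)[X]).Monic := by
    have e : (X ^ p - X : (ZMod p)[X]) = X ^ p + (-X) := by ring
    rw [e]
    apply monic_X_pow_add
    rw [degree_neg, degree_X]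
    exact_mod_cast h1
  have hroots : (X ^ p - X : (ZMod p)[X]).roots = Finset.univ.val := by
    have := FiniteField.roots_X_pow_card_sub_X (ZMod p)
    rwa [hcard] at this
  have key := prod_multiset_X_sub_C_of_monic_of_roots_card_eq hm'
    (by rw [hroots, hnd]; exact_mod_cast hcard)
  rw [hroots] at key
  rw [← key, Finset.prod_eq_multiset_prod]

private lemma key_field {F : Type} [Field F] (p : ℕ) [Fact p.Prime]
    [Algebra (ZMod p) F] (c₁ c₂ : ℤ) (α : F)
    (hα : α ^ 2 = (c₁ : F) * α - (c₂ : F))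
    (hnotin : ∀ a : ZMod p, α ≠ algebraMap (ZMod p) F a) :
    ((remAB c₁ c₂ (p + 1)).1 : ZMod p) = 2 * (c₂ : ZMod p) ∧
    ((remAB c₁ c₂ (p + 1)).2 : ZMod p) = -(c₁ : ZMod p) := by
  have hinj : Function.Injective (algebraMap (ZMod p) F) :=
    (algebraMap (ZMod p) F).injective
  haveI : CharP F p := charP_of_injective_algebraMap hinj p
  have hZα : ∏ a : ZMod p, (α - algebraMap (ZMod p) F a) = α ^ p - α := by
    have := congrArg (aeval α) (prod_univ_zmod (p := p))
    simpa using this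
  have h0 : α ^ 2 - (c₁ : F) * α + (c₂ : F) = 0 := by linear_combination hα
  have h2 : (α ^ p) ^ 2 - (c₁ : F) * α ^ p + (c₂ : F) = 0 := by
    have h3 := congrArg (frobenius F p) h0
    simp only [map_add, map_sub, map_mul, map_pow, map_intCast, map_zero,
      frobenius_def] at h3
    linear_combination h3
  have hfactor : (α ^ p - α) * (α ^ p - ((c₁ : F) - α)) = 0 := by
    linear_combination h2 - hα
  have hfrob : α ^ p = (c₁ : F) - α := by
    rcases mul_eq_zero.mp hfactor with h | h
    · exfalso
      have hz : ∏ a : ZMod p, (α - algebraMap (ZMod p) F a) = 0 := by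
        rw [hZα]; linear_combination h
      obtain ⟨a, -, ha⟩ := Finset.prod_eq_zero_iff.mp hz
      exact hnotin a (by linear_combination ha)
    · linear_combination h
  have hrange : ∏ k ∈ Finset.range p, (α + (k : F))
      = ∏ a : ZMod p, (α + algebraMap (ZMod p) F a) := by
    refine Finset.prod_nbij' (fun k => ((k : ZMod p))) (fun a => a.val)
      (fun a _ => Finset.mem_univ _)
      (fun a _ => Finset.mem_range.mpr (ZMod.val_lt a))
      (fun a ha => ZMod.val_cast_of_lt (Finset.mem_range.mp ha))
      (fun a _ => ZMod.natCast_rightInverse a)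
      (fun a _ => by rw [map_natCast])
  have hneg : ∏ a : ZMod p, (α + algebraMap (ZMod p) F a)
      = ∏ a : ZMod p, (α - algebraMap (ZMod p) F a) := by
    apply Fintype.prod_equiv (Equiv.neg (ZMod p))
    intro a
    rw [Equiv.neg_apply, map_neg]
    ring
  have hprod : ∏ k ∈ Finset.range (p + 1), (α + (k : F))
      = 2 * (c₂ : F) - (c₁ : F) * α := by
    rw [Finset.prod_range_succ, hrange, hneg, hZα, hfrob]
    have hp0 : ((p : ℕ) : F) = 0 := CharP.cast_eq_zero F p
    rw [hp0]
    linear_combination (-2 : F) * hα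
  have hK := remAB_prod c₁ c₂ α hα (p + 1)
  rw [hprod] at hK
  set A := (remAB c₁ c₂ (p + 1)).1 with hA
  set B := (remAB c₁ c₂ (p + 1)).2 with hB
  have hmain : algebraMap (ZMod p) F (((A - 2 * c₂ : ℤ) : ZMod p))
      + algebraMap (ZMod p) F (((B + c₁ : ℤ) : ZMod p)) * α = 0 := by
    rw [map_intCast, map_intCast]
    push_cast
    linear_combination -hK
  set u := ((A - 2 * c₂ : ℤ) : ZMod p) with hu
  set v := ((B + c₁ : ℤ) : ZMod p) with hv
  have hv0 : v = 0 := by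
    by_contra hv0
    apply hnotin (-u / v)
    rw [map_div₀, map_neg, eq_div_iff (by
      exact fun h => hv0 (hinj (by rw [h, map_zero])))]
    linear_combination hmain
  have hu0 : u = 0 := by
    apply hinj
    rw [map_zero]
    rw [hv0, map_zero] at hmain
    linear_combination hmain
  rw [hu] at hu0
  rw [hv] at hv0
  push_cast at hu0 hv0
  constructor
  · linear_combination hu0
  · linear_combination hv0

private lemma remAB_modp (p : ℕ) [hFp : Fact p.Prime] (c₁ c₂ : ℤ)
    (hns : ¬ IsSquare ((c₁ ^ 2 - 4 * c₂ : ℤ) : ZMod p)) :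
    ((remAB c₁ c₂ (p + 1)).1 : ZMod p) = 2 * (c₂ : ZMod p) ∧
    ((remAB c₁ c₂ (p + 1)).2 : ZMod p) = -(c₁ : ZMod p) := by
  have hZp : ∀ r : ZMod p, r ^ 2 - (c₁ : ZMod p) * r + (c₂ : ZMod p) ≠ 0 := by
    intro r hr
    exact hns ⟨2 * r - (c₁ : ZMod p), by push_cast; linear_combination (-4 : ZMod p) * hr⟩
  set fp : (ZMod p)[X] := X ^ 2 - C (c₁ : ZMod p) * X + C (c₂ : ZMod p) with hfpdef
  have hirr : Irreducible fp := by rw [hfpdef]; exact quad_irred _ _ hZp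
  haveI := Fact.mk hirr
  set α := AdjoinRoot.root fp with hαdef
  have hα : α ^ 2 = (c₁ : AdjoinRoot fp) * α - (c₂ : AdjoinRoot fp) := by
    have haev : aeval α (X ^ 2 - C (c₁ : ZMod p) * X + C (c₂ : ZMod p)) = 0 := by
      rw [← hfpdef, AdjoinRoot.aeval_eq, AdjoinRoot.mk_self]
    simp only [map_add, map_sub, map_mul, map_pow, aeval_X, aeval_C, map_intCast] at haev
    linear_combination haev
  have hinj : Function.Injective (algebraMap (ZMod p) (AdjoinRoot fp)) :=
    (algebraMap (ZMod p) (AdjoinRoot fp)).injective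
  have hnotin : ∀ a : ZMod p, α ≠ algebraMap (ZMod p) (AdjoinRoot fp) a := by
    intro a ha
    apply hZp a
    apply hinj
    simp only [map_add, map_sub, map_mul, map_pow, map_zero, map_intCast]
    rw [← ha]
    linear_combination hα
  exact key_field p c₁ c₂ α hα hnotin



/-- Remark 3.9 (Claim): if Δ = c₁² − 4c₂ is not a square mod p, then
X² − c₁X + c₂ is irreducible over ℚ, and in K = ℚ[X]/(X² − c₁X + c₂) the
trace of θ(θ+1)⋯(θ+p) is a rational integer congruent to −Δ mod p, hence
not divisible by p, and its quotient by (p+1)! is not an integer. -/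
theorem stmt19 (p : ℕ) (hp : p.Prime) (c₁ c₂ : ℤ)
    (hns : ¬ IsSquare ((c₁ ^ 2 - 4 * c₂ : ℤ) : ZMod p)) :
    Irreducible
      (Polynomial.X ^ 2 - Polynomial.C (c₁ : ℚ) * Polynomial.X +
        Polynomial.C (c₂ : ℚ)) ∧
    ∃ m : ℤ,
      Algebra.trace ℚ
          (AdjoinRoot
            (Polynomial.X ^ 2 - Polynomial.C (c₁ : ℚ) * Polynomial.X +
              Polynomial.C (c₂ : ℚ)))
          (∏ k ∈ Finset.range (p + 1),
            (AdjoinRoot.root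
                (Polynomial.X ^ 2 - Polynomial.C (c₁ : ℚ) * Polynomial.X +
                  Polynomial.C (c₂ : ℚ)) + (k : AdjoinRoot _))) = (m : ℚ) ∧
      ((m : ZMod p) = ((-(c₁ ^ 2 - 4 * c₂) : ℤ) : ZMod p)) ∧
      ¬ ((p : ℤ) ∣ m) ∧
      ¬ ∃ q : ℤ, (m : ℚ) / (Nat.factorial (p + 1) : ℚ) = (q : ℚ) := by
  haveI := Fact.mk hp
  set f : ℚ[X] := X ^ 2 - C (c₁ : ℚ) * X + C (c₂ : ℚ) with hfdef
  have hm : f.Monic := by rw [hfdef]; monicity!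
  have hnd : f.natDegree = 2 := by rw [hfdef]; compute_degree!
  have hf0 : f ≠ 0 := hm.ne_zero
  -- irreducibility over ℚ
  have hQ : ∀ r : ℚ, r ^ 2 - (c₁ : ℚ) * r + (c₂ : ℚ) ≠ 0 := by
    intro r hr
    have hint : IsIntegral ℤ (2 * r - (c₁ : ℚ)) := by
      refine ⟨X ^ 2 - C (c₁ ^ 2 - 4 * c₂), by monicity!, ?_⟩
      rw [← Polynomial.aeval_def]
      simp only [map_sub, map_pow, map_mul, map_ofNat, map_intCast, aeval_X, aeval_C,
        algebraMap_int_eq, eq_intCast]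
      linear_combination (4 : ℚ) * hr
    obtain ⟨n, hn⟩ := IsIntegrallyClosed.isIntegral_iff.mp hint
    apply hns
    refine ⟨(n : ZMod p), ?_⟩
    have hn' : (n : ℚ) = 2 * r - (c₁ : ℚ) := by exact_mod_cast hn
    have hn2 : (c₁ ^ 2 - 4 * c₂ : ℤ) = n * n := by
      have : ((c₁ ^ 2 - 4 * c₂ : ℤ) : ℚ) = (n : ℚ) * (n : ℚ) := by
        rw [hn']
        push_cast
        linear_combination (-4 : ℚ) * hr
      exact_mod_cast this
    rw [hn2]
    push_cast
    ring
  have hirr : Irreducible f := by rw [hfdef]; exact quad_irred _ _ hQ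
  haveI := Fact.mk hirr
  refine ⟨hirr, ?_⟩
  set K := AdjoinRoot f with hK
  set θ := AdjoinRoot.root f with hθdef
  haveI := (AdjoinRoot.powerBasis hf0).finite
  have hθsq : θ ^ 2 = (c₁ : K) * θ - (c₂ : K) := by
    have haev : aeval θ (X ^ 2 - C (c₁ : ℚ) * X + C (c₂ : ℚ)) = 0 := by
      rw [← hfdef]; exact (AdjoinRoot.aeval_eq f).trans AdjoinRoot.mk_self
    simp only [map_add, map_sub, map_mul, map_pow, aeval_X, aeval_C, map_intCast] at haev
    linear_combination haev
  have hfin : Module.finrank ℚ K = 2 := by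
    rw [(AdjoinRoot.powerBasis hf0).finrank, AdjoinRoot.powerBasis_dim, hnd]
  have htrθ : Algebra.trace ℚ K θ = (c₁ : ℚ) := by
    have h := (AdjoinRoot.powerBasis hf0).trace_gen_eq_nextCoeff_minpoly
    rw [AdjoinRoot.powerBasis_gen, AdjoinRoot.minpoly_root hf0, hm.leadingCoeff, inv_one,
      map_one, mul_one] at h
    rw [← hθdef] at h
    refine h.trans ?_
    rw [nextCoeff_of_natDegree_pos (by omega), hnd]
    rw [hfdef]
    simp only [coeff_add, coeff_sub, coeff_X_pow, coeff_C_mul, coeff_X_one, coeff_C]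
    norm_num
  set A := (remAB c₁ c₂ (p + 1)).1 with hA
  set B := (remAB c₁ c₂ (p + 1)).2 with hB
  have hmodp := remAB_modp p c₁ c₂ hns
  rw [← hA, ← hB] at hmodp
  have hmod : ((2 * A + c₁ * B : ℤ) : ZMod p) = ((-(c₁ ^ 2 - 4 * c₂) : ℤ) : ZMod p) := by
    push_cast
    rw [hmodp.1, hmodp.2]
    ring
  have hΔ0 : ((c₁ ^ 2 - 4 * c₂ : ℤ) : ZMod p) ≠ 0 := by
    intro h
    exact hns ⟨0, by rw [h]; ring⟩
  have hndvd : ¬ ((p : ℤ) ∣ (2 * A + c₁ * B)) := by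
    intro hdvd
    have h0 : ((2 * A + c₁ * B : ℤ) : ZMod p) = 0 :=
      (ZMod.intCast_zmod_eq_zero_iff_dvd _ p).mpr hdvd
    rw [hmod] at h0
    apply hΔ0
    push_cast at h0 ⊢
    linear_combination -h0
  refine ⟨2 * A + c₁ * B, ?_, hmod, hndvd, ?_⟩
  · -- trace computation
    have hprodK := remAB_prod c₁ c₂ θ hθsq (p + 1)
    rw [← hA, ← hB] at hprodK
    rw [hprodK]
    have e : ((A : K) + (B : K) * θ) = algebraMap ℚ K (A : ℚ) + (B : ℚ) • θ := by
      rw [map_intCast, Algebra.smul_def, map_intCast]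
    rw [e, map_add, LinearMap.map_smul]
    erw [htrθ, Algebra.trace_algebraMap, hfin]
    push_cast [smul_eq_mul]
    ring
  · rintro ⟨q, hq⟩
    have hfac0 : ((p + 1).factorial : ℚ) ≠ 0 := by
      exact_mod_cast (p + 1).factorial_ne_zero
    rw [div_eq_iff hfac0] at hq
    have hz : (2 * A + c₁ * B : ℤ) = q * ((p + 1).factorial : ℤ) := by
      exact_mod_cast hq
    apply hndvd
    rw [hz]
    exact Dvd.dvd.mul_left (Int.natCast_dvd_natCast.mpr
      (Nat.dvd_factorial hp.pos (by omega))) q
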